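/- For every x ∈ ℂ with x ≠ 1 and every function h : ℕ → ℂ such that ∑_{n≥0} |x^n h(n)| < ∞, and every K ∈ ℕ, one has ∑_{n≥0} x^n h(n) = ∑_{r=0}^{K-1} x^r (Δ^r h)(0) / (1-x)^{r+1} + (x^K/(1-x)^K) ∑_{n≥0} x^n (Δ^K h)(n), where Δ is the forward difference operator Δh(n) = h(n+1) - h(n) and Δ^r is its r-th iterate. -/

import Mathlib

open scoped BigOperators

/-- Forward difference operator on sequences. -/
noncomputable def fdiff (h : ℕ → ℂ) : ℕ → ℂ := fun n => h (n + 1) - h n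

lemma summable_shift (x : ℂ) (h : ℕ → ℂ)
    (hs : Summable fun n : ℕ => ‖x ^ n * h n‖) :
    Summable fun n : ℕ => ‖x ^ n * h (n + 1)‖ := by
  rcases eq_or_ne x 0 with rfl | hx0
  · apply summable_of_ne_finset_zero (s := {0})
    intro n hn
    simp only [Finset.mem_singleton] at hn
    simp [zero_pow hn]
  · have h1 : Summable fun n : ℕ => ‖x ^ (n + 1) * h (n + 1)‖ :=
      (summable_nat_add_iff 1).mpr hs
    have : (fun n : ℕ => ‖x ^ n * h (n + 1)‖) =
        fun n : ℕ => ‖x‖⁻¹ * ‖x ^ (n + 1) * h (n + 1)‖ := by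
      funext n
      rw [norm_mul, norm_mul, norm_pow, norm_pow, pow_succ]
      have hne : ‖x‖ ≠ 0 := by simpa using hx0
      field_simp
    rw [this]
    exact h1.mul_left _

lemma summable_fdiff (x : ℂ) (h : ℕ → ℂ)
    (hs : Summable fun n : ℕ => ‖x ^ n * h n‖) :
    Summable fun n : ℕ => ‖x ^ n * fdiff h n‖ := by
  have h1 := summable_shift x h hs
  refine Summable.of_nonneg_of_le (fun n => by positivity) (fun n => ?_) (h1.add hs)
  simp only [fdiff, mul_sub]
  simpa [sub_eq_add_neg] using norm_add_le (x ^ n * h (n + 1)) (-(x ^ n * h n))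

lemma summable_iter (x : ℂ) (h : ℕ → ℂ)
    (hs : Summable fun n : ℕ => ‖x ^ n * h n‖) (K : ℕ) :
    Summable fun n : ℕ => ‖x ^ n * (fdiff^[K] h) n‖ := by
  induction K generalizing h with
  | zero => simpa using hs
  | succ K ih =>
    rw [Function.iterate_succ_apply]
    exact ih (fdiff h) (summable_fdiff x h hs)

lemma euler_step (x : ℂ) (hx : x ≠ 1) (h : ℕ → ℂ)
    (hs : Summable fun n : ℕ => ‖x ^ n * h n‖) :
    ∑' n : ℕ, x ^ n * h n =
      h 0 / (1 - x) + x / (1 - x) * ∑' n : ℕ, x ^ n * fdiff h n := by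
  have h1x : (1 : ℂ) - x ≠ 0 := sub_ne_zero.mpr (Ne.symm hx)
  have hsum : Summable fun n : ℕ => x ^ n * h n :=
    (summable_norm_iff.mp (by simpa using hs))
  have hshift : Summable fun n : ℕ => x ^ n * h (n + 1) :=
    (summable_norm_iff.mp (by simpa using summable_shift x h hs))
  have hT : (∑' n : ℕ, x ^ n * fdiff h n) =
      (∑' n : ℕ, x ^ n * h (n + 1)) - ∑' n : ℕ, x ^ n * h n := by
    rw [← Summable.tsum_sub hshift hsum]
    congr 1; funext n; simp [fdiff, mul_sub]
  have hshift2 : x * (∑' n : ℕ, x ^ n * h (n + 1)) = (∑' n : ℕ, x ^ n * h n) - h 0 := by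
    rw [← tsum_mul_left]
    have : (fun n : ℕ => x * (x ^ n * h (n + 1))) = fun n : ℕ => x ^ (n + 1) * h (n + 1) := by
      funext n; ring
    rw [this, Summable.tsum_eq_zero_add hsum]
    simp
  set S := ∑' n : ℕ, x ^ n * h n
  set U := ∑' n : ℕ, x ^ n * h (n + 1)
  rw [hT]
  have hinv : (1 - x) * (1 - x)⁻¹ = 1 := mul_inv_cancel₀ h1x
  linear_combination (-(1 - x)⁻¹) * hshift2 + (-S) * hinv

/-- Euler transform: for `x ≠ 1` and `h` with `∑ |xⁿ h n| < ∞`,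
`∑ xⁿ h n = ∑_{r<K} xʳ (Δʳh)(0)/(1-x)^{r+1} + x^K/(1-x)^K ∑ xⁿ (Δᴷh)(n)`. -/
theorem euler_transform (x : ℂ) (hx : x ≠ 1) (h : ℕ → ℂ)
    (hs : Summable fun n : ℕ => ‖x ^ n * h n‖) (K : ℕ) :
    ∑' n : ℕ, x ^ n * h n =
      (∑ r ∈ Finset.range K, x ^ r * (fdiff^[r] h) 0 / (1 - x) ^ (r + 1)) +
        x ^ K / (1 - x) ^ K * ∑' n : ℕ, x ^ n * (fdiff^[K] h) n := by
  have h1x : (1 : ℂ) - x ≠ 0 := sub_ne_zero.mpr (Ne.symm hx)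
  induction K with
  | zero => simp
  | succ K ih =>
    rw [ih, Finset.sum_range_succ]
    have hg := summable_iter x h hs K
    have step := euler_step x hx (fdiff^[K] h) hg
    rw [step, Function.iterate_succ_apply']
    field_simp
    ring
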